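/- Let $\mathfrak{g} = \mathfrak{h} \oplus \mathfrak{m}$ be a reductive decomposition with $\operatorname{ad}(\mathfrak{h})$-invariant inner product on $\mathfrak{m}$ satisfying the GO-condition, and let $\mathfrak{m} = \mathfrak{m}_1 \oplus \mathfrak{m}_2$ be an orthogonal $\operatorname{ad}(\mathfrak{h})$-invariant splitting. Let $(Y_i)$ be an orthonormal basis of $\mathfrak{m}_2$. Then for every $X \in \mathfrak{m}_1$, $B_{\mathfrak{g}}(X,X) = B_{\mathfrak{k}}(X,X) - \sum_i |[X,Y_i]_{\mathfrak{m}_2}|^2$, where $B_{\mathfrak{g}}$ is the Killing form of $\mathfrak{g}$, $\mathfrak{k} = \mathfrak{h} \oplus \mathfrak{m}_1$ is assumed to be a subalgebra, and $B_{\mathfrak{k}}$ is its Killing form. -/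

import Mathlib

/-- Killing form comparison in a GO reductive decomposition: for `X ∈ 𝔪₁`,
`B_𝔤(X,X) = B_𝔨(X,X) - ∑ᵢ |[X,Yᵢ]_{𝔪₂}|²`, where `𝔨 = 𝔥 ⊕ 𝔪₁` is a subalgebra,
`[𝔨, 𝔪₂] ⊆ 𝔪₂`, and `(Yᵢ)` is an orthonormal basis of `𝔪₂`. -/
theorem stmt11 (𝔤 : Type*) [LieRing 𝔤] [LieAlgebra ℝ 𝔤] [Module.Finite ℝ 𝔤]
    (h m : Submodule ℝ 𝔤) (hcompl : IsCompl h m)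
    (hred : ∀ H ∈ h, ∀ X ∈ m, ⁅H, X⁆ ∈ m)
    (ip : 𝔤 →ₗ[ℝ] 𝔤 →ₗ[ℝ] ℝ)
    (ipsymm : ∀ X Y : 𝔤, ip X Y = ip Y X)
    (ippos : ∀ X ∈ m, X ≠ 0 → 0 < ip X X)
    (πm : 𝔤 →ₗ[ℝ] 𝔤)
    (hπm : ∀ X ∈ m, πm X = X) (hπh : ∀ H ∈ h, πm H = 0)
    (hinv : ∀ H ∈ h, ∀ X ∈ m, ∀ Y ∈ m, ip (πm ⁅H, X⁆) Y + ip X (πm ⁅H, Y⁆) = 0)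
    -- the GO-condition
    (hGO : ∀ X ∈ m, ∃ H ∈ h, ∀ Y ∈ m, ip (πm ⁅H + X, Y⁆) X = 0)
    -- the orthogonal ad(𝔥)-invariant splitting 𝔪 = 𝔪₁ ⊕ 𝔪₂
    (m1 m2 : Submodule ℝ 𝔤) (hsup : m1 ⊔ m2 = m) (hinf : m1 ⊓ m2 = ⊥)
    (horth : ∀ X ∈ m1, ∀ Y ∈ m2, ip X Y = 0)
    (hinv1 : ∀ H ∈ h, ∀ X ∈ m1, ⁅H, X⁆ ∈ m1)
    (hinv2 : ∀ H ∈ h, ∀ X ∈ m2, ⁅H, X⁆ ∈ m2)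
    -- 𝔨 = 𝔥 ⊕ 𝔪₁, a subalgebra of 𝔤
    (K : LieSubalgebra ℝ 𝔤) (hK : K.toSubmodule = h ⊔ m1)
    -- [𝔨, 𝔪₂] ⊆ 𝔪₂
    (hKm2 : ∀ U ∈ K, ∀ Y ∈ m2, ⁅U, Y⁆ ∈ m2)
    -- an orthonormal basis (Yᵢ) of 𝔪₂
    (ι : Type*) [Fintype ι] [DecidableEq ι] (Yb : ι → 𝔤) (hYmem : ∀ i, Yb i ∈ m2)
    (hONB : ∀ i j, ip (Yb i) (Yb j) = if i = j then (1 : ℝ) else 0)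
    (hYspan : Submodule.span ℝ (Set.range Yb) = m2) :
    ∀ X : 𝔤, ∀ _ : X ∈ m1, ∀ hXK : X ∈ K,
      killingForm ℝ 𝔤 X X =
        killingForm ℝ K ⟨X, hXK⟩ ⟨X, hXK⟩
          - ∑ i, ip ⁅X, Yb i⁆ ⁅X, Yb i⁆ := by
  intro X hXm1 hXK
  have hm1m : m1 ≤ m := hsup ▸ le_sup_left
  have hm2m : m2 ≤ m := hsup ▸ le_sup_right
  have hXm : X ∈ m := hm1m hXm1
  have hbrk : ∀ Y ∈ m2, ⁅X, Y⁆ ∈ m2 := fun Y hY => hKm2 X hXK Y hY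
  -- quadratic vanishing from the GO condition
  have hquad : ∀ Y ∈ m2, ip ⁅X, Y⁆ Y = 0 := by
    intro Y hY
    obtain ⟨H, hH, hprop⟩ := hGO (X + Y) (m.add_mem hXm (hm2m hY))
    have h1 := hprop Y (hm2m hY)
    have hHY : ⁅H, Y⁆ ∈ m2 := hinv2 H hH Y hY
    have hXY : ⁅X, Y⁆ ∈ m2 := hbrk Y hY
    have e1 : πm ⁅H + (X + Y), Y⁆ = ⁅H, Y⁆ + ⁅X, Y⁆ := by
      rw [add_lie, add_lie, lie_self, add_zero, map_add, hπm _ (hm2m hHY),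
        hπm _ (hm2m hXY)]
    rw [e1] at h1
    have e2 : ip ⁅H, Y⁆ X = 0 := by rw [ipsymm]; exact horth X hXm1 _ hHY
    have e3 : ip ⁅H, Y⁆ Y = 0 := by
      have h2 := hinv H hH Y (hm2m hY) Y (hm2m hY)
      rw [hπm _ (hm2m hHY), ipsymm Y] at h2; linarith
    have e4 : ip ⁅X, Y⁆ X = 0 := by rw [ipsymm]; exact horth X hXm1 _ hXY
    simp only [map_add, LinearMap.add_apply] at h1
    linarith
  -- skew symmetry of ad X on m2
  have hskew : ∀ Y ∈ m2, ∀ Z ∈ m2, ip ⁅X, Y⁆ Z + ip ⁅X, Z⁆ Y = 0 := by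
    intro Y hY Z hZ
    have hq := hquad (Y + Z) (m2.add_mem hY hZ)
    simp only [lie_add, map_add, LinearMap.add_apply] at hq
    have h1 := hquad Y hY
    have h2 := hquad Z hZ
    linarith
  -- the internal direct sum 𝔤 = K ⊕ m2
  have hcomplK : IsCompl (K.toSubmodule) m2 := by
    constructor
    · rw [disjoint_iff, eq_bot_iff]
      rintro u ⟨hu1, hu2⟩
      rw [hK] at hu1
      obtain ⟨a, ha, b, hb, rfl⟩ := Submodule.mem_sup.mp hu1
      have ham : a ∈ m := by
        have h3 := m.sub_mem (hm2m hu2) (hm1m hb)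
        simpa using h3
      have ha0 : a = 0 := by
        have := hcompl.disjoint.le_bot (Submodule.mem_inf.mpr ⟨ha, ham⟩)
        simpa using this
      subst ha0
      have hb0 : b = 0 := by
        have hbm2 : b ∈ m2 := by simpa using hu2
        have : b ∈ m1 ⊓ m2 := ⟨hb, hbm2⟩
        rw [hinf] at this; simpa using this
      simp [hb0]
    · rw [codisjoint_iff, hK, sup_assoc, hsup, hcompl.codisjoint.eq_top]
  let A : Bool → Submodule ℝ 𝔤 := fun b => match b with
    | true => K.toSubmodule
    | false => m2
  have hint : DirectSum.IsInternal A := by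
    rw [DirectSum.isInternal_submodule_iff_isCompl A (i := true) (j := false)
      (by simp) (by ext b; cases b <;> simp)]
    exact hcomplK
  set f : 𝔤 →ₗ[ℝ] 𝔤 := LieAlgebra.ad ℝ 𝔤 X ∘ₗ LieAlgebra.ad ℝ 𝔤 X with hf_def
  have hf : ∀ b, Set.MapsTo f (A b) (A b) := by
    intro b
    cases b
    · intro u hu
      exact hbrk _ (hbrk u hu)
    · intro u hu
      exact K.lie_mem hXK (K.lie_mem hXK hu)
  have htr := LinearMap.trace_eq_sum_trace_restrict hint hf
  -- identify the K-part
  have hKtrace : LinearMap.trace ℝ (A true) (f.restrict (hf true)) =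
      killingForm ℝ K ⟨X, hXK⟩ ⟨X, hXK⟩ := by
    rw [killingForm_apply_apply]
    congr 1
  -- the orthonormal basis of m2
  let Y' : ι → m2 := fun i => ⟨Yb i, hYmem i⟩
  have hcoe_sum : ∀ (c : ι → ℝ), ((∑ i, c i • Y' i : m2) : 𝔤) = ∑ i, c i • Yb i := by
    intro c
    push_cast
    rfl
  have hli : LinearIndependent ℝ Y' := by
    rw [Fintype.linearIndependent_iff]
    intro c hc j
    have h0 : ((∑ i, c i • Y' i : m2) : 𝔤) = 0 := by rw [hc]; rfl
    rw [hcoe_sum] at h0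
    have h2 : ip (∑ i, c i • Yb i) (Yb j) = 0 := by rw [h0]; simp
    simpa [hONB, Finset.sum_ite_eq'] using h2
  have hspan' : ⊤ ≤ Submodule.span ℝ (Set.range Y') := by
    have hmap : Submodule.map m2.subtype (Submodule.span ℝ (Set.range Y')) =
        Submodule.map m2.subtype ⊤ := by
      rw [Submodule.map_span, Submodule.map_top, Submodule.range_subtype]
      rw [← Set.range_comp]
      exact hYspan
    exact (Submodule.map_injective_of_injective m2.injective_subtype hmap).ge
  let b : Module.Basis ι ℝ m2 := Module.Basis.mk hli hspan'
  have hrepr : ∀ (w : m2) (j : ι), b.repr w j = ip (w : 𝔤) (Yb j) := by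
    intro w j
    conv_rhs => rw [← b.sum_repr w]
    have hbi : ∀ i, ((b i : m2) : 𝔤) = Yb i := by
      intro i
      rw [show b i = Y' i from Module.Basis.mk_apply hli hspan' i]
    have hcoe : ((∑ i, b.repr w i • b i : m2) : 𝔤) = ∑ i, b.repr w i • Yb i := by
      push_cast
      exact Finset.sum_congr rfl fun i _ => by rw [hbi]
    rw [hcoe]
    simp [hONB, Finset.sum_ite_eq']
  have htrm2 : LinearMap.trace ℝ (A false) (f.restrict (hf false)) =
      ∑ j, ip ⁅X, ⁅X, Yb j⁆⁆ (Yb j) := by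
    rw [LinearMap.trace_eq_matrix_trace ℝ b, Matrix.trace]
    refine Finset.sum_congr rfl fun j _ => ?_
    rw [Matrix.diag_apply, LinearMap.toMatrix_apply, hrepr]
    have hval : (((f.restrict (hf false)) (b j) : m2) : 𝔤) = ⁅X, ⁅X, Yb j⁆⁆ := by
      rw [show b j = Y' j from Module.Basis.mk_apply hli hspan' j]
      simp [f, LinearMap.restrict_apply, Y']
      rfl
    rw [hval]
  -- put everything together
  have hfinal : ∀ j, ip ⁅X, ⁅X, Yb j⁆⁆ (Yb j) = - ip ⁅X, Yb j⁆ ⁅X, Yb j⁆ := by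
    intro j
    have := hskew ⁅X, Yb j⁆ (hbrk _ (hYmem j)) (Yb j) (hYmem j)
    rw [ipsymm ⁅X, Yb j⁆ ⁅X, Yb j⁆] at this
    linarith
  rw [killingForm_apply_apply, htr, Fintype.sum_bool, hKtrace, htrm2]
  rw [Finset.sum_congr rfl fun j _ => hfinal j]
  rw [Finset.sum_neg_distrib]
  ring
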